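/- Let A ∈ (0,1]^K be an allocation rule and d ≥ 1 an integer. For any family μ = (μ_1, …, μ_K) of Borel probability measures on the cube [0,1]^d, define W_d(A, μ) = Σ_{r=1}^d [ Σ_{t=1}^K π_t·(∫ s_r² dμ_t(s))/A_t − (Σ_{t=1}^K π_t·∫ s_r dμ_t(s))² ]. Then sup over all such families μ of W_d(A, μ) equals d · sup_{q ∈ [0,1]^K} V(A,q). -/

import Mathlib

open MeasureTheory

private lemma my_integrable_dirac {α E : Type*} [MeasurableSpace α] [MeasurableSingletonClass α]
    [NormedAddCommGroup E] {f : α → E} (hf : StronglyMeasurable f) (a : α) :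
    Integrable f (Measure.dirac a) := by
  refine ⟨hf.aestronglyMeasurable, ?_⟩
  rw [HasFiniteIntegral, lintegral_dirac]
  exact ENNReal.coe_lt_top

private lemma mix_integral {d : ℕ} {a : ℝ} (ha : 0 ≤ a) (ha1 : a ≤ 1) (f : (Fin d → ℝ) → ℝ)
    (hf : StronglyMeasurable f) :
    ∫ s, f s ∂((ENNReal.ofReal a • Measure.dirac (1 : Fin d → ℝ)) +
        (ENNReal.ofReal (1 - a) • Measure.dirac (0 : Fin d → ℝ))) = a * f 1 + (1-a) * f 0 := by
  rw [integral_add_measure ((my_integrable_dirac hf 1).smul_measure ENNReal.ofReal_ne_top)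
      ((my_integrable_dirac hf 0).smul_measure ENNReal.ofReal_ne_top),
    integral_smul_measure, integral_smul_measure, integral_dirac, integral_dirac,
    ENNReal.toReal_ofReal ha, ENNReal.toReal_ofReal (by linarith), smul_eq_mul, smul_eq_mul]

theorem worst_case_multidimensional_eq_d_times_scalar
    (K : ℕ) (hK : 1 ≤ K) (d : ℕ) (hd : 1 ≤ d) (c π A : ℕ → ℝ)
    (hc : ∀ t ∈ Finset.Icc 1 K, 0 < c t)
    (hcmono : ∀ j ∈ Finset.Icc 1 (K - 1), c j < c (j + 1))
    (hπpos : ∀ t ∈ Finset.Icc 1 K, 0 < π t)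
    (hπsum : ∑ t ∈ Finset.Icc 1 K, π t = 1)
    (hApos : ∀ t ∈ Finset.Icc 1 K, 0 < A t)
    (hAle1 : ∀ t ∈ Finset.Icc 1 K, A t ≤ 1) :
    sSup {w : ℝ | ∃ μ : ℕ → Measure (Fin d → ℝ),
        (∀ t, IsProbabilityMeasure (μ t)) ∧
        (∀ t, μ t (Set.Icc (0 : Fin d → ℝ) 1) = 1) ∧
        w = ∑ r : Fin d,
          ((∑ t ∈ Finset.Icc 1 K, π t * (∫ s, (s r) ^ 2 ∂(μ t)) / A t)
            - (∑ t ∈ Finset.Icc 1 K, π t * ∫ s, s r ∂(μ t)) ^ 2)}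
      = (d : ℝ) * sSup {w : ℝ | ∃ q : ℕ → ℝ,
          (∀ t ∈ Finset.Icc 1 K, q t ∈ Set.Icc (0 : ℝ) 1) ∧
          w = (∑ t ∈ Finset.Icc 1 K, π t * q t / A t)
            - (∑ t ∈ Finset.Icc 1 K, π t * q t) ^ 2} := by
  classical
  have hd0 : (0:ℝ) < (d:ℝ) := by exact_mod_cast hd
  set S : Set ℝ := {w : ℝ | ∃ q : ℕ → ℝ,
          (∀ t ∈ Finset.Icc 1 K, q t ∈ Set.Icc (0 : ℝ) 1) ∧
          w = (∑ t ∈ Finset.Icc 1 K, π t * q t / A t)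
            - (∑ t ∈ Finset.Icc 1 K, π t * q t) ^ 2} with hSdef
  set W : Set ℝ := {w : ℝ | ∃ μ : ℕ → Measure (Fin d → ℝ),
        (∀ t, IsProbabilityMeasure (μ t)) ∧
        (∀ t, μ t (Set.Icc (0 : Fin d → ℝ) 1) = 1) ∧
        w = ∑ r : Fin d,
          ((∑ t ∈ Finset.Icc 1 K, π t * (∫ s, (s r) ^ 2 ∂(μ t)) / A t)
            - (∑ t ∈ Finset.Icc 1 K, π t * ∫ s, s r ∂(μ t)) ^ 2)} with hWdef
  -- 0 ∈ S
  have h0S : (0:ℝ) ∈ S := ⟨fun _ => 0, fun t _ => by simp, by simp⟩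
  -- S is bounded above
  have hSbdd : BddAbove S := by
    refine ⟨∑ t ∈ Finset.Icc 1 K, π t / A t, ?_⟩
    rintro w ⟨q, hq, rfl⟩
    have h1 : ∑ t ∈ Finset.Icc 1 K, π t * q t / A t ≤ ∑ t ∈ Finset.Icc 1 K, π t / A t := by
      apply Finset.sum_le_sum
      intro t ht
      have hqt := (hq t ht)
      rw [Set.mem_Icc] at hqt
      have hA := hApos t ht
      have hπ := hπpos t ht
      exact (div_le_div_iff_of_pos_right hA).mpr (by nlinarith)
    nlinarith [sq_nonneg (∑ t ∈ Finset.Icc 1 K, π t * q t)]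
  have hSnn : (0:ℝ) ≤ sSup S := le_csSup hSbdd h0S
  -- Upper bound: every element of W is at most d * sSup S
  have hub : ∀ w ∈ W, w ≤ (d:ℝ) * sSup S := by
    rintro w ⟨μ, hprob, hsupp, rfl⟩
    have key : ∀ r : Fin d,
        (∑ t ∈ Finset.Icc 1 K, π t * (∫ s, (s r) ^ 2 ∂(μ t)) / A t)
          - (∑ t ∈ Finset.Icc 1 K, π t * ∫ s, s r ∂(μ t)) ^ 2 ≤ sSup S := by
      intro r
      have hae : ∀ t, ∀ᵐ s ∂(μ t), s ∈ Set.Icc (0 : Fin d → ℝ) 1 := by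
        intro t
        have := hprob t
        have hc0 : μ t (Set.Icc (0 : Fin d → ℝ) 1)ᶜ = 0 := by
          rw [measure_compl measurableSet_Icc (measure_ne_top _ _), hsupp t, measure_univ]
          simp
        rw [ae_iff]
        exact hc0
      have hmeas1 : StronglyMeasurable fun s : Fin d → ℝ => s r :=
        (measurable_pi_apply r).stronglyMeasurable
      have hmeas2 : StronglyMeasurable fun s : Fin d → ℝ => (s r) ^ 2 :=
        ((measurable_pi_apply r).pow_const 2).stronglyMeasurable
      have hint1 : ∀ t, Integrable (fun s => s r) (μ t) := by
        intro t
        apply Integrable.mono' (integrable_const (1:ℝ)) hmeas1.aestronglyMeasurable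
        filter_upwards [hae t] with s hs
        rw [Set.mem_Icc] at hs
        have h0 := hs.1 r; have h1 := hs.2 r
        simp only [Pi.zero_apply, Pi.one_apply] at h0 h1
        rw [Real.norm_eq_abs, abs_le]; constructor <;> linarith
      have hint2 : ∀ t, Integrable (fun s => (s r) ^ 2) (μ t) := by
        intro t
        apply Integrable.mono' (integrable_const (1:ℝ)) hmeas2.aestronglyMeasurable
        filter_upwards [hae t] with s hs
        rw [Set.mem_Icc] at hs
        have h0 := hs.1 r; have h1 := hs.2 r
        simp only [Pi.zero_apply, Pi.one_apply] at h0 h1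
        rw [Real.norm_eq_abs, abs_le]; constructor <;> nlinarith
      have hqmem : ∀ t, (∫ s, s r ∂(μ t)) ∈ Set.Icc (0:ℝ) 1 := by
        intro t
        have := hprob t
        constructor
        · apply integral_nonneg_of_ae
          filter_upwards [hae t] with s hs
          rw [Set.mem_Icc] at hs
          have h0 := hs.1 r
          simpa using h0
        · calc ∫ s, s r ∂(μ t) ≤ ∫ _, (1:ℝ) ∂(μ t) := by
                apply integral_mono_ae (hint1 t) (integrable_const 1)
                filter_upwards [hae t] with s hs
                rw [Set.mem_Icc] at hs
                have h1 := hs.2 r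
                simpa using h1
            _ = 1 := by simp
      have h2le : ∀ t, (∫ s, (s r) ^ 2 ∂(μ t)) ≤ ∫ s, s r ∂(μ t) := by
        intro t
        apply integral_mono_ae (hint2 t) (hint1 t)
        filter_upwards [hae t] with s hs
        rw [Set.mem_Icc] at hs
        have h0 := hs.1 r; have h1 := hs.2 r
        simp only [Pi.zero_apply, Pi.one_apply] at h0 h1
        nlinarith
      have hsum : (∑ t ∈ Finset.Icc 1 K, π t * (∫ s, (s r) ^ 2 ∂(μ t)) / A t)
          ≤ ∑ t ∈ Finset.Icc 1 K, π t * (∫ s, s r ∂(μ t)) / A t := by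
        apply Finset.sum_le_sum
        intro t ht
        exact (div_le_div_iff_of_pos_right (hApos t ht)).mpr
          (mul_le_mul_of_nonneg_left (h2le t) (hπpos t ht).le)
      have hinS : (∑ t ∈ Finset.Icc 1 K, π t * (∫ s, s r ∂(μ t)) / A t)
          - (∑ t ∈ Finset.Icc 1 K, π t * (∫ s, s r ∂(μ t))) ^ 2 ∈ S :=
        ⟨fun t => ∫ s, s r ∂(μ t), fun t _ => hqmem t, rfl⟩
      have := le_csSup hSbdd hinS
      linarith
    calc (∑ r : Fin d, ((∑ t ∈ Finset.Icc 1 K, π t * (∫ s, (s r) ^ 2 ∂(μ t)) / A t)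
            - (∑ t ∈ Finset.Icc 1 K, π t * ∫ s, s r ∂(μ t)) ^ 2))
        ≤ ∑ _r : Fin d, sSup S := Finset.sum_le_sum fun r _ => key r
      _ = (d:ℝ) * sSup S := by
          simp [Finset.sum_const, Finset.card_univ, nsmul_eq_mul]
  -- Lower construction: d * v ∈ W for every v ∈ S
  have hlow : ∀ v ∈ S, (d:ℝ) * v ∈ W := by
    rintro v ⟨q, hq, rfl⟩
    set q' : ℕ → ℝ := fun t => if t ∈ Finset.Icc 1 K then q t else 0 with hq'def
    have hq'eq : ∀ t ∈ Finset.Icc 1 K, q' t = q t := by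
      intro t ht
      simp only [hq'def]
      exact if_pos ht
    have hq'01 : ∀ t, 0 ≤ q' t ∧ q' t ≤ 1 := by
      intro t
      by_cases h : t ∈ Finset.Icc 1 K
      · have := hq t h; rw [Set.mem_Icc] at this; rw [hq'eq t h]; exact this
      · simp only [hq'def]; rw [if_neg h]; norm_num
    set μ' : ℕ → Measure (Fin d → ℝ) := fun t =>
      ENNReal.ofReal (q' t) • Measure.dirac (1 : Fin d → ℝ)
      + ENNReal.ofReal (1 - q' t) • Measure.dirac (0 : Fin d → ℝ) with hμ'def
    have h1mem : (1 : Fin d → ℝ) ∈ Set.Icc (0 : Fin d → ℝ) 1 :=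
      ⟨fun i => by simp, le_rfl⟩
    have h0mem : (0 : Fin d → ℝ) ∈ Set.Icc (0 : Fin d → ℝ) 1 :=
      ⟨le_rfl, fun i => by simp⟩
    have hsum1 : ∀ t, ENNReal.ofReal (q' t) + ENNReal.ofReal (1 - q' t) = 1 := by
      intro t
      have he : q' t + (1 - q' t) = 1 := by ring
      rw [← ENNReal.ofReal_add (hq'01 t).1 (by linarith [(hq'01 t).2]), he, ENNReal.ofReal_one]
    have hint_s : ∀ (t : ℕ) (r : Fin d), ∫ s, s r ∂(μ' t) = q' t := by
      intro t r
      rw [hμ'def]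
      rw [mix_integral (hq'01 t).1 (hq'01 t).2 _ ((measurable_pi_apply r).stronglyMeasurable)]
      simp
    have hint_sq : ∀ (t : ℕ) (r : Fin d), ∫ s, (s r) ^ 2 ∂(μ' t) = q' t := by
      intro t r
      rw [hμ'def]
      rw [mix_integral (hq'01 t).1 (hq'01 t).2 _
        (((measurable_pi_apply r).pow_const 2).stronglyMeasurable)]
      simp
    refine ⟨μ', ?_, ?_, ?_⟩
    · intro t
      refine ⟨?_⟩
      rw [hμ'def]
      simp only [Measure.coe_add, Measure.coe_smul, Pi.add_apply, Pi.smul_apply,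
        measure_univ, smul_eq_mul, mul_one]
      exact hsum1 t
    · intro t
      rw [hμ'def]
      simp only [Measure.coe_add, Measure.coe_smul, Pi.add_apply, Pi.smul_apply, smul_eq_mul]
      rw [Measure.dirac_apply' _ measurableSet_Icc, Measure.dirac_apply' _ measurableSet_Icc,
        Set.indicator_of_mem h1mem, Set.indicator_of_mem h0mem]
      simp only [Pi.one_apply, mul_one]
      exact hsum1 t
    · have hterm : ∀ r : Fin d,
          (∑ t ∈ Finset.Icc 1 K, π t * (∫ s, (s r) ^ 2 ∂(μ' t)) / A t)
            - (∑ t ∈ Finset.Icc 1 K, π t * ∫ s, s r ∂(μ' t)) ^ 2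
          = (∑ t ∈ Finset.Icc 1 K, π t * q t / A t)
            - (∑ t ∈ Finset.Icc 1 K, π t * q t) ^ 2 := by
        intro r
        have e1 : ∀ t ∈ Finset.Icc 1 K,
            π t * (∫ s, (s r) ^ 2 ∂(μ' t)) / A t = π t * q t / A t := by
          intro t ht; rw [hint_sq t r, hq'eq t ht]
        have e2 : ∀ t ∈ Finset.Icc 1 K, π t * (∫ s, s r ∂(μ' t)) = π t * q t := by
          intro t ht; rw [hint_s t r, hq'eq t ht]
        rw [Finset.sum_congr rfl e1, Finset.sum_congr rfl e2]
      rw [Finset.sum_congr rfl (fun r _ => hterm r)]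
      simp [Finset.sum_const, Finset.card_univ, nsmul_eq_mul]
      ring
  -- assemble
  have hWbdd : BddAbove W := ⟨(d:ℝ) * sSup S, fun w hw => hub w hw⟩
  have hW0 : (0:ℝ) ∈ W := by simpa using hlow 0 h0S
  have hWnn : (0:ℝ) ≤ sSup W := le_csSup hWbdd hW0
  apply le_antisymm
  · exact Real.sSup_le hub (mul_nonneg hd0.le hSnn)
  · have h1 : sSup S ≤ sSup W / d := by
      apply Real.sSup_le
      · intro v hv
        rw [le_div_iff₀ hd0, mul_comm]
        exact le_csSup hWbdd (hlow v hv)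
      · exact div_nonneg hWnn hd0.le
    calc (d:ℝ) * sSup S ≤ (d:ℝ) * (sSup W / d) := mul_le_mul_of_nonneg_left h1 hd0.le
      _ = sSup W := by field_simp
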